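/- Let μ be the uniform probability measure on the unit sphere S² ⊂ ℝ³ and let 0 < κ < √3. Then the double average of the mutual information over the isotropic correlation matrix E = (κ/√3)·I₃ satisfies ∫_{S²} ∫_{S²} Ibin((κ/√3)·(n·m)) dμ(n) dμ(m) = ((3+κ²)·artanh(κ/√3) − √3·κ·(1 − ln(1−κ²/3))) / (√3·κ·ln 4). -/

import Mathlib

open MeasureTheory Matrix

/-- Euclidean norm of a vector in ℝ³. -/
noncomputable def enorm3 (v : Fin 3 → ℝ) : ℝ := Real.sqrt (v 0 ^ 2 + v 1 ^ 2 + v 2 ^ 2)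

/-- Euclidean inner product on ℝ³. -/
def dot3 (v w : Fin 3 → ℝ) : ℝ := v 0 * w 0 + v 1 * w 1 + v 2 * w 2

/-- `μ` is the uniform (rotation-invariant) probability measure on the unit sphere
`S² = {v ∈ ℝ³ : |v| = 1}`: it is a probability measure, it gives full measure to the
sphere, and it is invariant under every orthogonal transformation of ℝ³. -/
def IsUniformSphereMeasure (μ : Measure (Fin 3 → ℝ)) : Prop :=
  IsProbabilityMeasure μ ∧
  μ {v | v 0 ^ 2 + v 1 ^ 2 + v 2 ^ 2 ≠ 1} = 0 ∧
  ∀ O : Matrix (Fin 3) (Fin 3) ℝ, O * Oᵀ = 1 → μ.map (Matrix.mulVec O) = μ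


/-- The binary mutual information `Ibin(x) = ((1+x)·log₂(1+x) + (1−x)·log₂(1−x))/2`. -/
noncomputable def Ibin (x : ℝ) : ℝ :=
  ((1 + x) * Real.logb 2 (1 + x) + (1 - x) * Real.logb 2 (1 - x)) / 2

/-- The inverse hyperbolic tangent. -/
noncomputable def artanh (x : ℝ) : ℝ := Real.log ((1 + x) / (1 - x)) / 2

section Auxiliary


lemma measurable_Ibin : Measurable Ibin := by
  unfold Ibin Real.logb
  have h1 : Measurable fun x : ℝ => (1:ℝ) + x := measurable_const.add measurable_id
  have h2 : Measurable fun x : ℝ => (1:ℝ) - x := measurable_const.sub measurable_id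
  exact (((h1.mul ((Real.measurable_log.comp h1).div_const _)).add
    (h2.mul ((Real.measurable_log.comp h2).div_const _))).div_const _)

lemma measurable_mulVec3 (O : Matrix (Fin 3) (Fin 3) ℝ) : Measurable (Matrix.mulVec O) := by
  have : Matrix.mulVec O = (Matrix.mulVecLin O : (Fin 3 → ℝ) →ₗ[ℝ] (Fin 3 → ℝ)) := rfl
  rw [this]
  exact (LinearMap.continuous_of_finiteDimensional _).measurable


lemma exists_orthog (u : Fin 3 → ℝ) (hu : u 0 ^ 2 + u 1 ^ 2 + u 2 ^ 2 = 1) :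
    ∃ O : Matrix (Fin 3) (Fin 3) ℝ, O * Oᵀ = 1 ∧ ∀ j, O 0 j = u j := by
  classical
  set E := EuclideanSpace ℝ (Fin 3)
  let u' : E := (WithLp.equiv 2 (Fin 3 → ℝ)).symm u
  have hnorm : ‖u'‖ = 1 := by
    rw [EuclideanSpace.norm_eq]
    have : ∀ i : Fin 3, u' i = u i := fun i => rfl
    simp only [this]
    rw [Fin.sum_univ_three]
    simp only [Real.norm_eq_abs, sq_abs]
    rw [hu, Real.sqrt_one]
  have hcard : Module.finrank ℝ E = Fintype.card (Fin 3) := by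
    simp [E, finrank_euclideanSpace]
  have horth : Orthonormal ℝ (Set.restrict {(0 : Fin 3)} (fun _ => u')) := by
    constructor
    · rintro ⟨i, hi⟩; exact hnorm
    · rintro ⟨i, hi⟩ ⟨j, hj⟩ hij
      exfalso
      apply hij
      simp only [Set.mem_singleton_iff] at hi hj
      exact Subtype.ext (hi.trans hj.symm)
  obtain ⟨b, hb⟩ := horth.exists_orthonormalBasis_extension_of_card_eq hcard
  refine ⟨Matrix.of (fun i j => b i j), ?_, ?_⟩
  · ext i i'
    rw [Matrix.mul_apply, Fin.sum_univ_three]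
    have := orthonormal_iff_ite.mp b.orthonormal i i'
    rw [PiLp.inner_apply] at this
    simp only [RCLike.inner_apply, starRingEnd_apply, star_trivial] at this
    rw [Fin.sum_univ_three] at this
    simp only [Matrix.transpose_apply, Matrix.of_apply]
    rw [mul_comm ((b i) 0), mul_comm ((b i) 1), mul_comm ((b i) 2), this]
    simp [Matrix.one_apply, eq_comm]
  · intro j
    have h0 : b 0 = u' := hb 0 rfl
    simp only [Matrix.of_apply, h0]
    rfl




variable {μ : Measure (Fin 3 → ℝ)}

lemma measurable_dot3 (u : Fin 3 → ℝ) : Measurable (fun v => dot3 v u) := by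
  unfold dot3
  exact (((measurable_pi_apply 0).mul_const _).add ((measurable_pi_apply 1).mul_const _)).add
    ((measurable_pi_apply 2).mul_const _)

lemma mapA (hO : ∀ O : Matrix (Fin 3) (Fin 3) ℝ, O * Oᵀ = 1 → μ.map (Matrix.mulVec O) = μ)
    (u : Fin 3 → ℝ) (hu : u 0 ^ 2 + u 1 ^ 2 + u 2 ^ 2 = 1) :
    μ.map (fun v => dot3 v u) = μ.map (fun v => v 0) := by
  obtain ⟨O, hO1, hO2⟩ := exists_orthog u hu
  have h1 := hO O hO1
  have h2 : (fun v => dot3 v u) = (fun w : Fin 3 → ℝ => w 0) ∘ Matrix.mulVec O := by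
    ext v
    simp only [Function.comp_apply, Matrix.mulVec, dotProduct, Fin.sum_univ_three, hO2,
      dot3]
    ring
  rw [h2, ← Measure.map_map (measurable_pi_apply 0) (measurable_mulVec3 O), h1]

lemma intA (hO : ∀ O : Matrix (Fin 3) (Fin 3) ℝ, O * Oᵀ = 1 → μ.map (Matrix.mulVec O) = μ)
    (u : Fin 3 → ℝ) (hu : u 0 ^ 2 + u 1 ^ 2 + u 2 ^ 2 = 1) {g : ℝ → ℝ} (hg : Measurable g) :
    ∫ v, g (dot3 v u) ∂μ = ∫ v, g (v 0) ∂μ := by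
  rw [← integral_map (measurable_dot3 u).aemeasurable hg.aestronglyMeasurable, mapA hO u hu,
    integral_map (measurable_pi_apply 0).aemeasurable hg.aestronglyMeasurable]

lemma hae_sphere (hS : μ {v | v 0 ^ 2 + v 1 ^ 2 + v 2 ^ 2 ≠ 1} = 0) :
    ∀ᵐ v ∂μ, v 0 ^ 2 + v 1 ^ 2 + v 2 ^ 2 = 1 := by
  rw [ae_iff]; exact hS

lemma hae_abs (hS : μ {v | v 0 ^ 2 + v 1 ^ 2 + v 2 ^ 2 ≠ 1} = 0) :
    ∀ᵐ v ∂μ, |v 0| ≤ 1 ∧ |v 1| ≤ 1 ∧ |v 2| ≤ 1 := by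
  filter_upwards [hae_sphere hS] with v hv
  refine ⟨abs_le.2 ⟨?_, ?_⟩, abs_le.2 ⟨?_, ?_⟩, abs_le.2 ⟨?_, ?_⟩⟩ <;>
    nlinarith [sq_nonneg (v 0), sq_nonneg (v 1), sq_nonneg (v 2), sq_nonneg (v 0 - 1),
      sq_nonneg (v 0 + 1), sq_nonneg (v 1 - 1), sq_nonneg (v 1 + 1), sq_nonneg (v 2 - 1),
      sq_nonneg (v 2 + 1)]

lemma integ_bdd [IsProbabilityMeasure μ] {f : (Fin 3 → ℝ) → ℝ} (hf : Measurable f) {C : ℝ}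
    (hb : ∀ᵐ v ∂μ, |f v| ≤ C) : Integrable f μ :=
  (integrable_const C).mono' hf.aestronglyMeasurable (by simpa [Real.norm_eq_abs] using hb)

lemma mono_bdd (hS : μ {v | v 0 ^ 2 + v 1 ^ 2 + v 2 ^ 2 ≠ 1} = 0) (a b : ℕ) (i : Fin 3) :
    ∀ᵐ v ∂μ, |v 0 ^ a * v i ^ b| ≤ 1 := by
  filter_upwards [hae_abs hS] with v hv
  rw [abs_mul, abs_pow, abs_pow]
  have h0 : |v 0| ≤ 1 := hv.1
  have hi : |v i| ≤ 1 := by fin_cases i <;> [exact hv.1; exact hv.2.1; exact hv.2.2]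
  exact mul_le_one₀ (pow_le_one₀ (abs_nonneg _) h0) (pow_nonneg (abs_nonneg _) _)
    (pow_le_one₀ (abs_nonneg _) hi)

lemma integ_mono [IsProbabilityMeasure μ] (hS : μ {v | v 0 ^ 2 + v 1 ^ 2 + v 2 ^ 2 ≠ 1} = 0)
    (a b : ℕ) (i : Fin 3) : Integrable (fun v => v 0 ^ a * v i ^ b) μ :=
  integ_bdd (((measurable_pi_apply 0).pow_const _).mul ((measurable_pi_apply i).pow_const _))
    (mono_bdd hS a b i)

-- rotation identity: ∫ (x v0 + v1)^(2K+2) = (1+x²)^(K+1) ∫ v0^(2K+2)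
lemma rot_id [IsProbabilityMeasure μ]
    (hO : ∀ O : Matrix (Fin 3) (Fin 3) ℝ, O * Oᵀ = 1 → μ.map (Matrix.mulVec O) = μ)
    (K : ℕ) (x : ℝ) :
    ∫ v, (x * v 0 + v 1) ^ (2 * K + 2) ∂μ
      = (1 + x ^ 2) ^ (K + 1) * ∫ v, v 0 ^ (2 * K + 2) ∂μ := by
  set r := Real.sqrt (1 + x ^ 2) with hr_def
  have hx : (0:ℝ) < 1 + x ^ 2 := by positivity
  have hr : 0 < r := Real.sqrt_pos.2 hx
  have hr2 : r ^ 2 = 1 + x ^ 2 := Real.sq_sqrt hx.le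
  set u : Fin 3 → ℝ := ![x / r, 1 / r, 0] with hu_def
  have hu : u 0 ^ 2 + u 1 ^ 2 + u 2 ^ 2 = 1 := by
    simp only [hu_def, Matrix.cons_val_zero, Matrix.cons_val_one, Matrix.head_cons,
      Matrix.cons_val_two, Matrix.tail_cons]
    field_simp
    linarith [hr2]
  have hg : Measurable fun t : ℝ => t ^ (2 * K + 2) := measurable_id.pow_const _
  have h1 := intA hO u hu hg
  have h2 : ∀ v : Fin 3 → ℝ, dot3 v u = (x * v 0 + v 1) / r := by
    intro v
    simp only [dot3, hu_def, Matrix.cons_val_zero, Matrix.cons_val_one, Matrix.head_cons,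
      Matrix.cons_val_two, Matrix.tail_cons]
    field_simp
    ring
  simp only [h2, div_pow] at h1
  rw [integral_div] at h1
  have hrn : r ^ (2 * K + 2) = (1 + x ^ 2) ^ (K + 1) := by
    rw [show 2 * K + 2 = 2 * (K + 1) by ring, pow_mul, hr2]
  rw [div_eq_iff (by positivity : r ^ (2 * K + 2) ≠ 0)] at h1
  rw [h1, hrn]; ring

-- binomial expansion of the integral
lemma binom_id [IsProbabilityMeasure μ] (hS : μ {v | v 0 ^ 2 + v 1 ^ 2 + v 2 ^ 2 ≠ 1} = 0)
    (n : ℕ) (x : ℝ) :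
    ∫ v, (x * v 0 + v 1) ^ n ∂μ
      = ∑ j ∈ Finset.range (n + 1),
          ((n.choose j : ℝ) * ∫ v, v 0 ^ j * v 1 ^ (n - j) ∂μ) * x ^ j := by
  have hpt : ∀ v : Fin 3 → ℝ, (x * v 0 + v 1) ^ n
      = ∑ j ∈ Finset.range (n + 1), ((n.choose j : ℝ) * (v 0 ^ j * v 1 ^ (n - j))) * x ^ j := by
    intro v
    rw [add_pow]
    refine Finset.sum_congr rfl fun j hj => ?_
    rw [mul_pow]; ring
  simp only [hpt]
  rw [integral_finset_sum]
  · refine Finset.sum_congr rfl fun j hj => ?_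
    have : ∀ v : Fin 3 → ℝ, (n.choose j : ℝ) * (v 0 ^ j * v 1 ^ (n - j)) * x ^ j
        = ((n.choose j : ℝ) * x ^ j) * (v 0 ^ j * v 1 ^ (n - j)) := fun v => by ring
    simp only [this]
    rw [integral_const_mul]; ring
  · intro j hj
    exact (((integ_mono hS j (n - j) 1)).const_mul _).mul_const _

-- polynomial coefficient extraction
lemma poly_coeff (K : ℕ) (a : ℕ → ℝ) (b : ℕ → ℝ)
    (h : ∀ x : ℝ, ∑ j ∈ Finset.range (2 * K + 3), a j * x ^ j
        = ∑ i ∈ Finset.range (K + 2), b i * x ^ (2 * i)) :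
    a (2 * K) = b K := by
  set P : Polynomial ℝ := ∑ j ∈ Finset.range (2 * K + 3), Polynomial.C (a j) * Polynomial.X ^ j
  set Q : Polynomial ℝ := ∑ i ∈ Finset.range (K + 2), Polynomial.C (b i) * Polynomial.X ^ (2 * i)
  have hPQ : P = Q := by
    apply Polynomial.funext
    intro x
    simp only [P, Q, Polynomial.eval_finset_sum, Polynomial.eval_mul, Polynomial.eval_C,
      Polynomial.eval_pow, Polynomial.eval_X]
    exact h x
  have hP : P.coeff (2 * K) = a (2 * K) := by
    simp only [P, Polynomial.finset_sum_coeff, Polynomial.coeff_C_mul, Polynomial.coeff_X_pow]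
    rw [Finset.sum_eq_single (2 * K)]
    · simp
    · intro j hj hne
      simp [Ne.symm hne]
    · intro hn; exact absurd (Finset.mem_range.mpr (by omega)) hn
  have hQ : Q.coeff (2 * K) = b K := by
    simp only [Q, Polynomial.finset_sum_coeff, Polynomial.coeff_C_mul, Polynomial.coeff_X_pow]
    rw [Finset.sum_eq_single K]
    · simp
    · intro i hi hne
      have : ¬ (2 * K = 2 * i) := by omega
      simp [this]
    · intro hn; exact absurd (Finset.mem_range.mpr (by omega)) hn
  rw [← hP, ← hQ, hPQ]

-- the mixed moment identity
lemma mixed_moment [IsProbabilityMeasure μ] (hS : μ {v | v 0 ^ 2 + v 1 ^ 2 + v 2 ^ 2 ≠ 1} = 0)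
    (hO : ∀ O : Matrix (Fin 3) (Fin 3) ℝ, O * Oᵀ = 1 → μ.map (Matrix.mulVec O) = μ) (K : ℕ) :
    (2 * K + 1 : ℝ) * ∫ v, v 0 ^ (2 * K) * v 1 ^ 2 ∂μ = ∫ v, v 0 ^ (2 * K + 2) ∂μ := by
  have key : ∀ x : ℝ,
      ∑ j ∈ Finset.range (2 * K + 3),
        (((2 * K + 2).choose j : ℝ) * ∫ v, v 0 ^ j * v 1 ^ (2 * K + 2 - j) ∂μ) * x ^ j
      = ∑ i ∈ Finset.range (K + 2),
        (((K + 1).choose i : ℝ) * ∫ v, v 0 ^ (2 * K + 2) ∂μ) * x ^ (2 * i) := by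
    intro x
    have h1 := binom_id hS (n := 2 * K + 2) (x := x)
    have h2 := rot_id hO (K := K) (x := x)
    have h3 : (1 + x ^ 2) ^ (K + 1) = ∑ i ∈ Finset.range (K + 2), ((K + 1).choose i : ℝ) * x ^ (2 * i) := by
      rw [add_comm (1:ℝ), add_pow]
      refine Finset.sum_congr rfl fun i hi => ?_
      rw [one_pow, pow_mul]; ring
    have : (2 * K + 2) + 1 = 2 * K + 3 := by ring
    rw [this] at h1
    rw [← h1, h2, h3, Finset.sum_mul]
    refine Finset.sum_congr rfl fun i hi => ?_
    ring
  have := poly_coeff K _ _ key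
  have hch1 : ((2 * K + 2).choose (2 * K) : ℝ) = (K + 1) * (2 * K + 1) := by
    have : (2 * K + 2).choose (2 * K) = (K + 1) * (2 * K + 1) := by
      have h := Nat.choose_symm (by omega : 2 ≤ 2 * K + 2) (n := 2 * K + 2)
      have h2 : 2 * K + 2 - 2 = 2 * K := by omega
      rw [h2] at h
      rw [h, Nat.choose_two_right]
      have e1 : 2 * K + 2 - 1 = 2 * K + 1 := by omega
      rw [e1]
      have e2 : (2 * K + 2) * (2 * K + 1) = 2 * ((K + 1) * (2 * K + 1)) := by ring
      omega
    rw [this]; push_cast; ring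
  have hch2 : ((K + 1).choose K : ℝ) = (K + 1) := by
    rw [Nat.choose_succ_self_right]; push_cast; ring
  have h4 : 2 * K + 2 - 2 * K = 2 := by omega
  rw [h4, hch1, hch2] at this
  have hK : (K + 1 : ℝ) ≠ 0 := by positivity
  apply mul_left_cancel₀ hK
  linear_combination this

-- swap coordinates 1 and 2
lemma swap_moment [IsProbabilityMeasure μ]
    (hO : ∀ O : Matrix (Fin 3) (Fin 3) ℝ, O * Oᵀ = 1 → μ.map (Matrix.mulVec O) = μ) (K : ℕ) :
    ∫ v, v 0 ^ (2 * K) * v 2 ^ 2 ∂μ = ∫ v, v 0 ^ (2 * K) * v 1 ^ 2 ∂μ := by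
  set O : Matrix (Fin 3) (Fin 3) ℝ := !![1,0,0; 0,0,1; 0,1,0] with hO_def
  have hOrt : O * Oᵀ = 1 := by
    ext i j
    fin_cases i <;> fin_cases j <;>
      simp [hO_def, Matrix.mul_apply, Fin.sum_univ_three, Matrix.one_apply,
        Matrix.transpose_apply, Matrix.vecHead, Matrix.vecTail]
  have h1 := hO O hOrt
  have hf : Measurable fun v : Fin 3 → ℝ => v 0 ^ (2 * K) * v 1 ^ 2 :=
    ((measurable_pi_apply 0).pow_const _).mul ((measurable_pi_apply 1).pow_const _)
  have h2 : ∫ v, v 0 ^ (2 * K) * v 1 ^ 2 ∂μ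
      = ∫ v, (O.mulVec v) 0 ^ (2 * K) * (O.mulVec v) 1 ^ 2 ∂μ := by
    conv_lhs => rw [← h1]
    rw [integral_map (measurable_mulVec3 O).aemeasurable hf.aestronglyMeasurable]
  have h3 : ∀ v : Fin 3 → ℝ, (O.mulVec v) 0 = v 0 ∧ (O.mulVec v) 1 = v 2 := by
    intro v
    constructor <;> simp [hO_def, Matrix.mulVec, dotProduct, Fin.sum_univ_three]
  rw [h2]
  refine integral_congr_ae (Filter.Eventually.of_forall fun v => ?_)
  simp only [(h3 v).1, (h3 v).2]

-- even moments
lemma even_moment [IsProbabilityMeasure μ] (hS : μ {v | v 0 ^ 2 + v 1 ^ 2 + v 2 ^ 2 ≠ 1} = 0)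
    (hO : ∀ O : Matrix (Fin 3) (Fin 3) ℝ, O * Oᵀ = 1 → μ.map (Matrix.mulVec O) = μ) (K : ℕ) :
    ∫ v, v 0 ^ (2 * K) ∂μ = 1 / (2 * K + 1) := by
  induction K with
  | zero => simp
  | succ K ih =>
    have hconstr : ∫ v, v 0 ^ (2 * K) ∂μ
        = (∫ v, v 0 ^ (2 * K + 2) ∂μ) + 2 * ∫ v, v 0 ^ (2 * K) * v 1 ^ 2 ∂μ := by
      have e1 : ∫ v, v 0 ^ (2 * K) ∂μ
          = ∫ v, v 0 ^ (2 * K) * (v 0 ^ 2 + v 1 ^ 2 + v 2 ^ 2) ∂μ := by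
        refine integral_congr_ae ?_
        filter_upwards [hae_sphere hS] with v hv
        rw [hv, mul_one]
      have e2 : ∀ v : Fin 3 → ℝ, v 0 ^ (2 * K) * (v 0 ^ 2 + v 1 ^ 2 + v 2 ^ 2)
          = v 0 ^ (2 * K + 2) + (v 0 ^ (2 * K) * v 1 ^ 2 + v 0 ^ (2 * K) * v 2 ^ 2) := by
        intro v; ring
      rw [e1]
      simp only [e2]
      rw [integral_add, integral_add]
      · rw [swap_moment hO K]; ring
      · exact integ_mono hS (2 * K) 2 1
      · exact integ_mono hS (2 * K) 2 2
      · have := integ_mono hS (2 * K + 2) 0 1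
        simpa using this
      · exact (integ_mono hS (2 * K) 2 1).add (integ_mono hS (2 * K) 2 2)
    have hmix := mixed_moment hS hO K
    have hK1 : (2 * K + 1 : ℝ) ≠ 0 := by positivity
    have hK3 : (2 * K + 3 : ℝ) ≠ 0 := by positivity
    have goal_eq : (2 * (K+1) : ℝ) + 1 = 2 * K + 3 := by ring
    have hrec : (2 * K + 3 : ℝ) * ∫ v, v 0 ^ (2 * K + 2) ∂μ
        = (2 * K + 1 : ℝ) * ∫ v, v 0 ^ (2 * K) ∂μ := by
      have : (2 * K + 1 : ℝ) * ∫ v, v 0 ^ (2 * K) ∂μ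
          = (2 * K + 1 : ℝ) * ∫ v, v 0 ^ (2 * K + 2) ∂μ
            + 2 * ((2 * K + 1 : ℝ) * ∫ v, v 0 ^ (2 * K) * v 1 ^ 2 ∂μ) := by
        rw [hconstr]; ring
      rw [hmix] at this
      linarith
    have e3 : 2 * (K + 1) = 2 * K + 2 := by omega
    have hval : ∫ v, v 0 ^ (2 * K + 2) ∂μ = 1 / (2 * (K:ℝ) + 3) := by
      rw [ih] at hrec
      field_simp at hrec ⊢
      linarith
    rw [e3, hval]
    push_cast
    ring




lemma hasSum_Ibin {x : ℝ} (h : |x| < 1) :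
    HasSum (fun k : ℕ => x ^ (2*k+2) / (((k:ℝ)+1)*(2*(k:ℝ)+1)) / (2 * Real.log 2)) (Ibin x) := by
  have h1x : (0:ℝ) < 1 + x := by have := abs_lt.1 h; linarith [this.1]
  have h2x : (0:ℝ) < 1 - x := by have := abs_lt.1 h; linarith [this.2]
  have h1 := Real.hasSum_log_sub_log_of_abs_lt_one h
  have hx2 : |x^2| < 1 := by
    rw [abs_pow]
    exact pow_lt_one₀ (abs_nonneg x) h (by norm_num)
  have h2 := Real.hasSum_pow_div_log_of_abs_lt_one hx2
  have h3 := ((h1.mul_left x).sub h2).div_const (2 * Real.log 2)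
  have hfun : (fun k : ℕ => (x * (2 * (1 / (2 * (k:ℝ) + 1)) * x ^ (2 * k + 1))
        - (x^2) ^ (k+1) / ((k:ℝ)+1)) / (2 * Real.log 2))
      = fun k : ℕ => x ^ (2*k+2) / (((k:ℝ)+1)*(2*(k:ℝ)+1)) / (2 * Real.log 2) := by
    funext k
    have e1 : (x^2)^(k+1) = x^(2*k+2) := by
      rw [← pow_mul, show 2*(k+1) = 2*k+2 from by omega]
    have c1 : (2*(k:ℝ)+1) ≠ 0 := by positivity
    have c2 : ((k:ℝ)+1) ≠ 0 := by positivity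
    rw [e1]
    by_cases hl : Real.log 2 = 0
    · simp [hl]
    · field_simp
      ring
  have hval : (x * (Real.log (1 + x) - Real.log (1 - x)) - -Real.log (1 - x^2))
      / (2 * Real.log 2) = Ibin x := by
    have hmul : Real.log (1 - x^2) = Real.log (1+x) + Real.log (1-x) := by
      rw [show (1:ℝ) - x^2 = (1+x)*(1-x) by ring, Real.log_mul h1x.ne' h2x.ne']
    rw [hmul]
    unfold Ibin Real.logb
    by_cases hl : Real.log 2 = 0
    · simp [hl]
    · field_simp
      ring
  rw [← hval, ← hfun]
  exact h3

lemma hasSum_closed {c : ℝ} (h0 : 0 < c) (h1 : c < 1) :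
    HasSum (fun k : ℕ => c ^ (2*k+2) / (((k:ℝ)+1)*(2*(k:ℝ)+1)*(2*(k:ℝ)+3)))
      (c * artanh c + Real.log (1 - c^2) + artanh c / c - 1) := by
  have habs : |c| < 1 := by rw [abs_of_pos h0]; exact h1
  have h1c : (0:ℝ) < 1 + c := by linarith
  have h2c : (0:ℝ) < 1 - c := by linarith
  have hartanh : artanh c = (Real.log (1+c) - Real.log (1-c)) / 2 := by
    unfold artanh
    rw [Real.log_div h1c.ne' h2c.ne']
  set L : ℝ := Real.log (1+c) - Real.log (1-c) with hL
  have hA := Real.hasSum_log_sub_log_of_abs_lt_one habs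
  have hc2 : |c^2| < 1 := by
    rw [abs_pow]
    exact pow_lt_one₀ (abs_nonneg c) habs (by norm_num)
  have hB := Real.hasSum_pow_div_log_of_abs_lt_one hc2
  have hC : HasSum (fun k : ℕ => 2 * (1 / (2 * ((k:ℝ)+1) + 1)) * c ^ (2 * (k+1) + 1))
      (L - 2 * c) := by
    have := (hasSum_nat_add_iff' (f := fun k : ℕ => 2 * (1 / (2 * (k:ℝ) + 1)) * c ^ (2 * k + 1))
      (g := L) 1).2 hA
    simp only [Finset.range_one, Finset.sum_singleton, Nat.cast_zero] at this
    norm_num at this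
    convert this using 2 with k
    · rfl
    push_cast
    ring_nf
  have hcomb := ((hA.mul_left (c/2)).sub hB).add (hC.mul_left (1/(2*c)))
  have hfun : (fun k : ℕ => (c/2 * (2 * (1 / (2 * (k:ℝ) + 1)) * c ^ (2 * k + 1))
        - (c^2) ^ (k+1) / ((k:ℝ)+1))
        + 1/(2*c) * (2 * (1 / (2 * ((k:ℝ)+1) + 1)) * c ^ (2 * (k+1) + 1)))
      = fun k : ℕ => c ^ (2*k+2) / (((k:ℝ)+1)*(2*(k:ℝ)+1)*(2*(k:ℝ)+3)) := by
    funext k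
    have e1 : (c^2)^(k+1) = c^(2*k+2) := by
      rw [← pow_mul, show 2*(k+1) = 2*k+2 from by omega]
    have e2 : 2 * (k+1) + 1 = (2*k+2) + 1 := by omega
    have c1 : (2*(k:ℝ)+1) ≠ 0 := by positivity
    have c2 : ((k:ℝ)+1) ≠ 0 := by positivity
    have c3 : (2*(k:ℝ)+3) ≠ 0 := by positivity
    rw [e1, e2, pow_succ]
    field_simp
    ring
  have hv : (c/2 * L - -Real.log (1 - c^2)) + 1/(2*c) * (L - 2*c)
      = c * artanh c + Real.log (1 - c^2) + artanh c / c - 1 := by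
    rw [hartanh]
    field_simp
    ring
  rw [← hv, ← hfun]
  exact hcomb

end Auxiliary

/-- Average mutual information for isotropic MMMS with correlation matrix `(κ/√3)·I₃`,
for `0 < κ < √3`:
`∫∫ Ibin((κ/√3)(n·m)) dμ(n) dμ(m)
   = ((3+κ²)·artanh(κ/√3) − √3κ(1 − ln(1−κ²/3))) / (√3 κ ln 4)`. -/
theorem stmt3 (μ : Measure (Fin 3 → ℝ)) (hμ : IsUniformSphereMeasure μ)
    (κ : ℝ) (hκ0 : 0 < κ) (hκ1 : κ < Real.sqrt 3) :
    (∫ m, ∫ n, Ibin ((κ / Real.sqrt 3) * dot3 n m) ∂μ ∂μ) =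
      ((3 + κ ^ 2) * artanh (κ / Real.sqrt 3) -
          Real.sqrt 3 * κ * (1 - Real.log (1 - κ ^ 2 / 3))) /
        (Real.sqrt 3 * κ * Real.log 4) := by
  obtain ⟨hP, hS, hO⟩ := hμ
  haveI := hP
  have hs3 : (0:ℝ) < Real.sqrt 3 := Real.sqrt_pos.2 (by norm_num)
  set c := κ / Real.sqrt 3 with hc_def
  have hc0 : 0 < c := div_pos hκ0 hs3
  have hc1 : c < 1 := (div_lt_one hs3).2 hκ1
  have hlog2 : 0 < Real.log 2 := Real.log_pos one_lt_two
  have hIb : Measurable fun t : ℝ => Ibin (c * t) :=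
    measurable_Ibin.comp (measurable_id.const_mul c)
  -- Step 1: the inner integral is a.e. constant
  have hinner : ∀ᵐ m ∂μ, (∫ n, Ibin (c * dot3 n m) ∂μ) = ∫ v, Ibin (c * v 0) ∂μ := by
    filter_upwards [hae_sphere hS] with m hm
    exact intA hO m hm hIb
  rw [integral_congr_ae hinner, integral_const, probReal_univ, one_smul]
  -- Step 2: expand Ibin into its power series and integrate term by term
  set g : ℕ → (Fin 3 → ℝ) → ℝ := fun k v =>
    (c * v 0) ^ (2*k+2) / (((k:ℝ)+1)*(2*(k:ℝ)+1)) / (2 * Real.log 2) with hg_def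
  have hgm : ∀ k, Measurable (g k) := fun k => by
    simp only [hg_def]
    exact ((((measurable_pi_apply 0 : Measurable fun v : Fin 3 → ℝ => v 0).const_mul c).pow_const _).div_const _).div_const _
  have hbd : ∀ k, ∀ᵐ v ∂μ,
      |g k v| ≤ c ^ (2*k+2) / (((k:ℝ)+1)*(2*(k:ℝ)+1)) / (2 * Real.log 2) := by
    intro k
    filter_upwards [hae_abs hS] with v hv
    have hden1 : (0:ℝ) < ((k:ℝ)+1)*(2*(k:ℝ)+1) := by positivity
    have hden2 : (0:ℝ) < 2 * Real.log 2 := by positivity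
    rw [hg_def]
    simp only
    rw [abs_div, abs_div, abs_pow, abs_of_pos hden1, abs_of_pos hden2]
    have hnum : |c * v 0| ^ (2*k+2) ≤ c ^ (2*k+2) := by
      apply pow_le_pow_left₀ (abs_nonneg _)
      rw [abs_mul, abs_of_pos hc0]
      exact mul_le_of_le_one_right hc0.le hv.1
    exact (div_le_div_iff_of_pos_right hden2).2 ((div_le_div_iff_of_pos_right hden1).2 hnum)
  have hint : ∀ k, Integrable (g k) μ := fun k => integ_bdd (hgm k) (hbd k)
  have hgeom : Summable fun k : ℕ => c ^ (2*k+2) / (2 * Real.log 2) := by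
    have h1 : Summable fun k : ℕ => c^2 * (c^2) ^ k :=
      (summable_geometric_of_lt_one (by positivity) (by nlinarith)).mul_left _
    refine ((h1.div_const (2 * Real.log 2)).congr fun k => ?_)
    rw [← pow_succ', ← pow_mul, show 2*(k+1) = 2*k+2 from by omega]
  have hintnorm : Summable fun k => ∫ v, ‖g k v‖ ∂μ := by
    refine Summable.of_nonneg_of_le
      (fun k => integral_nonneg fun v => norm_nonneg _) (fun k => ?_) hgeom
    have h1le : (1:ℝ) ≤ ((k:ℝ)+1)*(2*(k:ℝ)+1) := by nlinarith [Nat.cast_nonneg (α := ℝ) k]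
    calc ∫ v, ‖g k v‖ ∂μ
        ≤ ∫ _v, (c ^ (2*k+2) / (((k:ℝ)+1)*(2*(k:ℝ)+1)) / (2 * Real.log 2)) ∂μ :=
          integral_mono_ae (hint k).norm (integrable_const _)
            (by filter_upwards [hbd k] with v hv; simpa [Real.norm_eq_abs] using hv)
      _ = c ^ (2*k+2) / (((k:ℝ)+1)*(2*(k:ℝ)+1)) / (2 * Real.log 2) := by simp
      _ ≤ c ^ (2*k+2) / (2 * Real.log 2) := by
          rw [div_div]
          apply div_le_div_of_nonneg_left (by positivity) (by positivity)
          exact le_mul_of_one_le_left (by positivity) h1le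
  have hae_ts : ∀ᵐ v ∂μ, Ibin (c * v 0) = ∑' k, g k v := by
    filter_upwards [hae_abs hS] with v hv
    have habs : |c * v 0| < 1 := by
      rw [abs_mul, abs_of_pos hc0]
      calc c * |v 0| ≤ c * 1 := mul_le_mul_of_nonneg_left hv.1 hc0.le
        _ < 1 := by linarith
    exact (hasSum_Ibin habs).tsum_eq.symm
  rw [integral_congr_ae hae_ts, ← integral_tsum_of_summable_integral_norm hint hintnorm]
  -- Step 3: each term integrates via the moments
  have hgval : ∀ k : ℕ, ∫ v, g k v ∂μ
      = c ^ (2*k+2) / (((k:ℝ)+1)*(2*(k:ℝ)+1)*(2*(k:ℝ)+3)) / (2 * Real.log 2) := by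
    intro k
    have e : ∀ v : Fin 3 → ℝ, g k v
        = (c ^ (2*k+2) / (((k:ℝ)+1)*(2*(k:ℝ)+1)) / (2 * Real.log 2)) * v 0 ^ (2*k+2) := by
      intro v
      rw [hg_def]
      simp only
      rw [mul_pow]
      ring
    simp only [e]
    rw [integral_const_mul, show 2*k+2 = 2*(k+1) from by omega, even_moment hS hO (k+1)]
    have c1 : (2*(k:ℝ)+1) ≠ 0 := by positivity
    have c2 : ((k:ℝ)+1) ≠ 0 := by positivity
    have c3 : (2*(k:ℝ)+3) ≠ 0 := by positivity
    have c4 : (2 * Real.log 2) ≠ 0 := by positivity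
    push_cast
    field_simp
    ring
  rw [tsum_congr hgval]
  have hclosed : HasSum
      (fun k : ℕ => c ^ (2*k+2) / (((k:ℝ)+1)*(2*(k:ℝ)+1)*(2*(k:ℝ)+3)) / (2 * Real.log 2))
      ((c * artanh c + Real.log (1 - c^2) + artanh c / c - 1) / (2 * Real.log 2)) :=
    (hasSum_closed hc0 hc1).div_const _
  rw [hclosed.tsum_eq]
  -- Step 4: final algebra
  have h3 : Real.sqrt 3 ^ 2 = 3 := Real.sq_sqrt (by norm_num)
  have hc2 : 1 - c^2 = 1 - κ^2/3 := by rw [hc_def, div_pow, h3]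
  have hlog4 : Real.log 4 = 2 * Real.log 2 := by
    rw [show (4:ℝ) = 2^2 from by norm_num, Real.log_pow]
    push_cast; ring
  rw [hc2, hlog4, hc_def]
  have hl2 : Real.log 2 ≠ 0 := hlog2.ne'
  field_simp
  linear_combination artanh (κ / Real.sqrt 3) * h3
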